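/- Let T_1 and T_2 be bounded linear operators on a complex Hilbert space H. Then ‖T_1 + T_2‖² ≤ ω( (3/2)(T_1* T_1 + T_2* T_2) + T_1* T_2 ). -/

import Mathlib

open ContinuousLinearMap

/-- The numerical radius of a bounded linear operator on a complex Hilbert space:
`ω(T) = sup_{‖x‖ = 1} |⟨Tx, x⟩|`. -/
noncomputable def numRadius {H : Type*} [NormedAddCommGroup H] [InnerProductSpace ℂ H]
    (T : H →L[ℂ] H) : ℝ :=
  ⨆ x : {x : H // ‖x‖ = 1}, ‖(inner ℂ (T x) (x : H) : ℂ)‖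

theorem norm_sq_add_le_numRadius_three_halves
    {H : Type*} [NormedAddCommGroup H] [InnerProductSpace ℂ H] [CompleteSpace H]
    (T₁ T₂ : H →L[ℂ] H) :
    ‖T₁ + T₂‖ ^ 2 ≤
      numRadius (((3 : ℂ) / 2) • (adjoint T₁ ∘L T₁ + adjoint T₂ ∘L T₂) +
        adjoint T₁ ∘L T₂) := by
  set S := ((3 : ℂ) / 2) • (adjoint T₁ ∘L T₁ + adjoint T₂ ∘L T₂) + adjoint T₁ ∘L T₂ with hS
  have key : ∀ x : H, ‖x‖ = 1 → ‖(T₁ + T₂) x‖ ^ 2 ≤ ‖(inner ℂ (S x) x : ℂ)‖ := by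
    intro x hx
    have hinner : (inner ℂ (S x) x : ℂ)
        = ((3 : ℂ)/2) * ((‖T₁ x‖:ℂ)^2 + (‖T₂ x‖:ℂ)^2) + inner ℂ (T₂ x) (T₁ x) := by
      simp only [hS, ContinuousLinearMap.add_apply, ContinuousLinearMap.smul_apply,
        ContinuousLinearMap.comp_apply, inner_add_left, inner_smul_left,
        ContinuousLinearMap.adjoint_inner_left, inner_self_eq_norm_sq_to_K]
      simp [Complex.ext_iff]
      ring_nf
      norm_num
    have hre : ((inner ℂ (S x) x : ℂ)).re
        = (3/2) * (‖T₁ x‖^2 + ‖T₂ x‖^2) + ((inner ℂ (T₂ x) (T₁ x) : ℂ)).re := by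
      rw [hinner]; simp [← Complex.ofReal_pow]
    have hab : ((inner ℂ (T₂ x) (T₁ x) : ℂ)).re ≤ (‖T₁ x‖^2 + ‖T₂ x‖^2)/2 := by
      calc ((inner ℂ (T₂ x) (T₁ x) : ℂ)).re ≤ ‖(inner ℂ (T₂ x) (T₁ x) : ℂ)‖ :=
            Complex.re_le_norm _
        _ ≤ ‖T₂ x‖ * ‖T₁ x‖ := norm_inner_le_norm _ _
        _ ≤ (‖T₁ x‖^2 + ‖T₂ x‖^2)/2 := by nlinarith [sq_nonneg (‖T₁ x‖ - ‖T₂ x‖)]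
    have hexp : ‖(T₁ + T₂) x‖^2
        = ‖T₁ x‖^2 + 2*((inner ℂ (T₂ x) (T₁ x) : ℂ)).re + ‖T₂ x‖^2 := by
      have := @norm_add_sq ℂ H _ _ _ (T₁ x) (T₂ x)
      rw [ContinuousLinearMap.add_apply, this, inner_re_symm]; rfl
    have hle : ((inner ℂ (S x) x : ℂ)).re ≤ ‖(inner ℂ (S x) x : ℂ)‖ := Complex.re_le_norm _
    rw [hexp]
    rw [hre] at hle
    linarith
  have hbdd : BddAbove (Set.range fun x : {x : H // ‖x‖ = 1} =>
      ‖(inner ℂ (S x) (x : H) : ℂ)‖) := by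
    refine ⟨‖S‖, ?_⟩
    rintro r ⟨⟨x, hx⟩, rfl⟩
    calc ‖(inner ℂ (S x) x : ℂ)‖ ≤ ‖S x‖ * ‖x‖ := norm_inner_le_norm _ _
      _ ≤ (‖S‖ * ‖x‖) * ‖x‖ := by gcongr; exact S.le_opNorm x
      _ = ‖S‖ := by rw [hx]; ring
  have hnn : 0 ≤ numRadius S := Real.iSup_nonneg fun _ => norm_nonneg _
  have hop : ‖T₁ + T₂‖ ≤ Real.sqrt (numRadius S) := by
    apply opNorm_le_bound _ (Real.sqrt_nonneg _)
    intro x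
    rcases eq_or_ne x 0 with rfl | hx0
    · simp
    · have hxn : ‖x‖ ≠ 0 := norm_ne_zero_iff.mpr hx0
      set u : H := ((‖x‖ : ℂ))⁻¹ • x with hu
      have hun : ‖u‖ = 1 := by
        rw [hu, norm_smul, norm_inv, Complex.norm_real, norm_norm, inv_mul_cancel₀ hxn]
      have h1 : ‖(inner ℂ (S u) u : ℂ)‖ ≤ numRadius S := le_ciSup hbdd ⟨u, hun⟩
      have h2 : ‖(T₁ + T₂) u‖ ≤ Real.sqrt (numRadius S) := by
        rw [show Real.sqrt (numRadius S) = Real.sqrt (numRadius S) from rfl]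
        rw [← Real.sqrt_sq (norm_nonneg ((T₁ + T₂) u))]
        exact Real.sqrt_le_sqrt (le_trans (key u hun) h1)
      have hxeq : (T₁ + T₂) x = (‖x‖ : ℂ) • (T₁ + T₂) u := by
        rw [hu, map_smul, smul_smul, mul_inv_cancel₀ (by exact_mod_cast hxn : (‖x‖:ℂ) ≠ 0), one_smul]
      rw [hxeq, norm_smul, Complex.norm_real, norm_norm, mul_comm]
      exact mul_le_mul_of_nonneg_right h2 (norm_nonneg x)
  calc ‖T₁ + T₂‖ ^ 2 ≤ Real.sqrt (numRadius S) ^ 2 :=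
        pow_le_pow_left₀ (norm_nonneg _) hop 2
    _ = numRadius S := Real.sq_sqrt hnn
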